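/- arXiv:1303.1395 — 6 statements merged into one kernel-verified Lean document; each statement's English description precedes it below -/
import Mathlib

section
/- The permutation 2431 cannot be sorted by a machine consisting of a pop stack followed directly by a stack (the PS machine), i.e., there is no sequence of inputs (pushing the next input entry onto the pop stack), transfers (popping the entire contents of the pop stack onto the stack), and outputs (popping the top of the stack) that outputs 1,2,3,4 from input 2,4,3,1. -/
/-- One step of the PS machine.  State: (input, pop stack, stack, output);
stacks have their top at the head, output is appended at the end. -/
inductive PSStep : (List ℕ × List ℕ × List ℕ × List ℕ) → (List ℕ × List ℕ × List ℕ × List ℕ) → Prop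
  | input (x : ℕ) (inp ps st out : List ℕ) :
      PSStep (x :: inp, ps, st, out) (inp, x :: ps, st, out)
  | transfer (inp ps st out : List ℕ) (h : ps ≠ []) :
      PSStep (inp, ps, st, out) (inp, [], ps.reverse ++ st, out)
  | output (inp ps st out : List ℕ) (x : ℕ) :
      PSStep (inp, ps, x :: st, out) (inp, ps, st, out ++ [x])

/-- `p` can be sorted by a pop stack followed directly by a stack. -/
def PSSortable (p : List ℕ) : Prop :=
  Relation.ReflTransGen PSStep (p, [], [], []) ([], [], [], List.range' 1 p.length)

abbrev PSState := List ℕ × List ℕ × List ℕ × List ℕ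

def psSuccs : PSState → List PSState
  | (inp, ps, st, out) =>
    (match inp with | x :: r => [(r, x :: ps, st, out)] | [] => []) ++
    (if ps = [] then [] else [(inp, ([] : List ℕ), ps.reverse ++ st, out)]) ++
    (match st with | x :: r => [(inp, ps, r, out ++ [x])] | [] => [])

lemma psStep_mem {s t : PSState} (h : PSStep s t) : t ∈ psSuccs s := by
  cases h with
  | input x inp ps st out => simp [psSuccs]
  | transfer inp ps st out h => simp [psSuccs, h]
  | output inp ps st out x => simp [psSuccs]

def psR : List PSState := [
  ([], [], [], [1, 2, 4, 3]),
  ([], [], [], [1, 3, 2, 4]),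
  ([], [], [], [1, 3, 4, 2]),
  ([], [], [], [1, 4, 3, 2]),
  ([], [], [], [2, 1, 3, 4]),
  ([], [], [], [2, 1, 4, 3]),
  ([], [], [], [2, 3, 1, 4]),
  ([], [], [], [2, 3, 4, 1]),
  ([], [], [], [2, 4, 1, 3]),
  ([], [], [], [2, 4, 3, 1]),
  ([], [], [], [3, 1, 2, 4]),
  ([], [], [], [3, 1, 4, 2]),
  ([], [], [], [3, 2, 1, 4]),
  ([], [], [], [3, 2, 4, 1]),
  ([], [], [], [3, 4, 1, 2]),
  ([], [], [], [3, 4, 2, 1]),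
  ([], [], [], [4, 1, 3, 2]),
  ([], [], [], [4, 2, 1, 3]),
  ([], [], [], [4, 2, 3, 1]),
  ([], [], [], [4, 3, 1, 2]),
  ([], [], [], [4, 3, 2, 1]),
  ([], [], [1], [2, 3, 4]),
  ([], [], [1], [2, 4, 3]),
  ([], [], [1], [3, 2, 4]),
  ([], [], [1], [3, 4, 2]),
  ([], [], [1], [4, 2, 3]),
  ([], [], [1], [4, 3, 2]),
  ([], [], [1, 2], [3, 4]),
  ([], [], [1, 2], [4, 3]),
  ([], [], [1, 2, 4], [3]),
  ([], [], [1, 2, 4, 3], []),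
  ([], [], [1, 3], [2, 4]),
  ([], [], [1, 3], [4, 2]),
  ([], [], [1, 3, 2], [4]),
  ([], [], [1, 3, 2, 4], []),
  ([], [], [1, 3, 4], [2]),
  ([], [], [1, 3, 4, 2], []),
  ([], [], [1, 4], [2, 3]),
  ([], [], [1, 4], [3, 2]),
  ([], [], [1, 4, 2], [3]),
  ([], [], [1, 4, 3], [2]),
  ([], [], [1, 4, 3, 2], []),
  ([], [], [2], [1, 3, 4]),
  ([], [], [2], [1, 4, 3]),
  ([], [], [2], [3, 1, 4]),
  ([], [], [2], [3, 4, 1]),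
  ([], [], [2], [4, 1, 3]),
  ([], [], [2], [4, 3, 1]),
  ([], [], [2, 4], [1, 3]),
  ([], [], [2, 4], [3, 1]),
  ([], [], [2, 4, 3], [1]),
  ([], [], [2, 4, 3, 1], []),
  ([], [], [3], [1, 2, 4]),
  ([], [], [3], [2, 1, 4]),
  ([], [], [3], [2, 4, 1]),
  ([], [], [3], [4, 2, 1]),
  ([], [], [3, 1], [2, 4]),
  ([], [], [3, 1], [4, 2]),
  ([], [], [3, 1, 2], [4]),
  ([], [], [3, 1, 2, 4], []),
  ([], [], [3, 1, 4], [2]),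
  ([], [], [3, 1, 4, 2], []),
  ([], [], [3, 2], [1, 4]),
  ([], [], [3, 2], [4, 1]),
  ([], [], [3, 2, 4], [1]),
  ([], [], [3, 4], [2, 1]),
  ([], [], [3, 4, 2], [1]),
  ([], [], [4], [1, 3, 2]),
  ([], [], [4], [2, 1, 3]),
  ([], [], [4], [2, 3, 1]),
  ([], [], [4], [3, 1, 2]),
  ([], [], [4], [3, 2, 1]),
  ([], [], [4, 2], [1, 3]),
  ([], [], [4, 2], [3, 1]),
  ([], [], [4, 3], [1, 2]),
  ([], [], [4, 3], [2, 1]),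
  ([], [], [4, 3, 1], [2]),
  ([], [], [4, 3, 1, 2], []),
  ([], [], [4, 3, 2], [1]),
  ([], [1], [], [2, 3, 4]),
  ([], [1], [], [2, 4, 3]),
  ([], [1], [], [3, 2, 4]),
  ([], [1], [], [3, 4, 2]),
  ([], [1], [], [4, 2, 3]),
  ([], [1], [], [4, 3, 2]),
  ([], [1], [2], [3, 4]),
  ([], [1], [2], [4, 3]),
  ([], [1], [2, 4], [3]),
  ([], [1], [2, 4, 3], []),
  ([], [1], [3], [2, 4]),
  ([], [1], [3], [4, 2]),
  ([], [1], [3, 2], [4]),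
  ([], [1], [3, 2, 4], []),
  ([], [1], [3, 4], [2]),
  ([], [1], [3, 4, 2], []),
  ([], [1], [4], [2, 3]),
  ([], [1], [4], [3, 2]),
  ([], [1], [4, 2], [3]),
  ([], [1], [4, 3], [2]),
  ([], [1], [4, 3, 2], []),
  ([], [1, 3], [], [2, 4]),
  ([], [1, 3], [], [4, 2]),
  ([], [1, 3], [2], [4]),
  ([], [1, 3], [2, 4], []),
  ([], [1, 3], [4], [2]),
  ([], [1, 3], [4, 2], []),
  ([], [1, 3, 4], [], [2]),
  ([], [1, 3, 4], [2], []),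
  ([], [1, 3, 4, 2], [], []),
  ([1], [], [], [2, 3, 4]),
  ([1], [], [], [2, 4, 3]),
  ([1], [], [], [3, 2, 4]),
  ([1], [], [], [3, 4, 2]),
  ([1], [], [], [4, 2, 3]),
  ([1], [], [], [4, 3, 2]),
  ([1], [], [2], [3, 4]),
  ([1], [], [2], [4, 3]),
  ([1], [], [2, 4], [3]),
  ([1], [], [2, 4, 3], []),
  ([1], [], [3], [2, 4]),
  ([1], [], [3], [4, 2]),
  ([1], [], [3, 2], [4]),
  ([1], [], [3, 2, 4], []),
  ([1], [], [3, 4], [2]),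
  ([1], [], [3, 4, 2], []),
  ([1], [], [4], [2, 3]),
  ([1], [], [4], [3, 2]),
  ([1], [], [4, 2], [3]),
  ([1], [], [4, 3], [2]),
  ([1], [], [4, 3, 2], []),
  ([1], [3], [], [2, 4]),
  ([1], [3], [], [4, 2]),
  ([1], [3], [2], [4]),
  ([1], [3], [2, 4], []),
  ([1], [3], [4], [2]),
  ([1], [3], [4, 2], []),
  ([1], [3, 4], [], [2]),
  ([1], [3, 4], [2], []),
  ([1], [3, 4, 2], [], []),
  ([2, 4, 3, 1], [], [], []),
  ([3, 1], [], [], [2, 4]),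
  ([3, 1], [], [], [4, 2]),
  ([3, 1], [], [2], [4]),
  ([3, 1], [], [2, 4], []),
  ([3, 1], [], [4], [2]),
  ([3, 1], [], [4, 2], []),
  ([3, 1], [4], [], [2]),
  ([3, 1], [4], [2], []),
  ([3, 1], [4, 2], [], []),
  ([4, 3, 1], [], [], [2]),
  ([4, 3, 1], [], [2], []),
  ([4, 3, 1], [2], [], [])]

set_option maxRecDepth 100000 in
lemma psR_closed : ∀ s ∈ psR, ∀ t ∈ psSuccs s, t ∈ psR := by decide

set_option maxRecDepth 100000 in
lemma psR_reach : ∀ t, Relation.ReflTransGen PSStep (([2,4,3,1], [], [], []) : PSState) t → t ∈ psR := by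
  intro t h
  induction h with
  | refl => decide
  | tail _ h2 ih => exact psR_closed _ ih _ (psStep_mem h2)

set_option maxRecDepth 100000 in
theorem stmt0 : ¬ PSSortable [2, 4, 3, 1] := by
  intro h
  have := psR_reach _ h
  revert this
  decide
end

section
/- The permutation 3142 cannot be sorted by the PS machine (a pop stack followed directly by a stack). -/
abbrev St := List ℕ × List ℕ × List ℕ × List ℕ

def succs : St → List St
  | (inp, ps, st, out) =>
    (match inp with | [] => [] | x :: inp' => [(inp', x :: ps, st, out)]) ++
    (if ps = [] then [] else [(inp, [], ps.reverse ++ st, out)]) ++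
    (match st with | [] => [] | x :: st' => [(inp, ps, st', out ++ [x])])

lemma step_mem_succs {s t : St} (h : PSStep s t) : t ∈ succs s := by
  cases h with
  | input x inp ps st out => simp [succs]
  | transfer inp ps st out h =>
      simp only [succs, if_neg h, List.mem_append, List.mem_singleton]
      cases inp <;> simp
  | output inp ps st out x =>
      simp only [succs, List.mem_append, List.mem_singleton]
      cases inp <;> simp

def reachSet : List St := [
([], [], [], [1, 2, 4, 3]),
([], [], [], [1, 3, 2, 4]),
([], [], [], [1, 3, 4, 2]),
([], [], [], [1, 4, 2, 3]),
([], [], [], [1, 4, 3, 2]),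
([], [], [], [2, 1, 4, 3]),
([], [], [], [2, 3, 1, 4]),
([], [], [], [2, 4, 1, 3]),
([], [], [], [2, 4, 3, 1]),
([], [], [], [3, 1, 2, 4]),
([], [], [], [3, 1, 4, 2]),
([], [], [], [3, 2, 1, 4]),
([], [], [], [3, 2, 4, 1]),
([], [], [], [3, 4, 1, 2]),
([], [], [], [3, 4, 2, 1]),
([], [], [], [4, 1, 2, 3]),
([], [], [], [4, 1, 3, 2]),
([], [], [], [4, 2, 1, 3]),
([], [], [], [4, 2, 3, 1]),
([], [], [], [4, 3, 1, 2]),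
([], [], [], [4, 3, 2, 1]),
([], [], [1], [2, 4, 3]),
([], [], [1], [3, 2, 4]),
([], [], [1], [3, 4, 2]),
([], [], [1], [4, 2, 3]),
([], [], [1], [4, 3, 2]),
([], [], [1, 3], [2, 4]),
([], [], [1, 3], [4, 2]),
([], [], [1, 4], [2, 3]),
([], [], [1, 4], [3, 2]),
([], [], [1, 4, 2], [3]),
([], [], [1, 4, 2, 3], []),
([], [], [1, 4, 3], [2]),
([], [], [2], [1, 3, 4]),
([], [], [2], [1, 4, 3]),
([], [], [2], [3, 1, 4]),
([], [], [2], [3, 4, 1]),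
([], [], [2], [4, 1, 3]),
([], [], [2], [4, 3, 1]),
([], [], [2, 1], [3, 4]),
([], [], [2, 1], [4, 3]),
([], [], [2, 1, 3], [4]),
([], [], [2, 1, 4], [3]),
([], [], [2, 1, 4, 3], []),
([], [], [2, 3], [1, 4]),
([], [], [2, 3], [4, 1]),
([], [], [2, 3, 1], [4]),
([], [], [2, 3, 1, 4], []),
([], [], [2, 4], [1, 3]),
([], [], [2, 4], [3, 1]),
([], [], [2, 4, 1], [3]),
([], [], [2, 4, 1, 3], []),
([], [], [2, 4, 3], [1]),
([], [], [2, 4, 3, 1], []),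
([], [], [3], [1, 2, 4]),
([], [], [3], [1, 4, 2]),
([], [], [3], [2, 1, 4]),
([], [], [3], [2, 4, 1]),
([], [], [3], [4, 1, 2]),
([], [], [3], [4, 2, 1]),
([], [], [3, 1], [2, 4]),
([], [], [3, 1], [4, 2]),
([], [], [3, 1, 4], [2]),
([], [], [3, 1, 4, 2], []),
([], [], [4], [1, 3, 2]),
([], [], [4], [2, 3, 1]),
([], [], [4], [3, 1, 2]),
([], [], [4], [3, 2, 1]),
([], [], [4, 1], [3, 2]),
([], [], [4, 1, 3], [2]),
([], [], [4, 2], [1, 3]),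
([], [], [4, 2], [3, 1]),
([], [], [4, 2, 1], [3]),
([], [], [4, 2, 1, 3], []),
([], [], [4, 2, 3], [1]),
([], [], [4, 2, 3, 1], []),
([], [], [4, 3], [1, 2]),
([], [], [4, 3], [2, 1]),
([], [], [4, 3, 1], [2]),
([], [2], [], [1, 3, 4]),
([], [2], [], [1, 4, 3]),
([], [2], [], [3, 1, 4]),
([], [2], [], [3, 4, 1]),
([], [2], [], [4, 1, 3]),
([], [2], [], [4, 3, 1]),
([], [2], [1], [3, 4]),
([], [2], [1], [4, 3]),
([], [2], [1, 3], [4]),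
([], [2], [1, 4], [3]),
([], [2], [1, 4, 3], []),
([], [2], [3], [1, 4]),
([], [2], [3], [4, 1]),
([], [2], [3, 1], [4]),
([], [2], [3, 1, 4], []),
([], [2], [4], [1, 3]),
([], [2], [4], [3, 1]),
([], [2], [4, 1], [3]),
([], [2], [4, 1, 3], []),
([], [2], [4, 3], [1]),
([], [2], [4, 3, 1], []),
([], [2, 4], [], [1, 3]),
([], [2, 4], [], [3, 1]),
([], [2, 4], [1], [3]),
([], [2, 4], [1, 3], []),
([], [2, 4], [3], [1]),
([], [2, 4], [3, 1], []),
([], [2, 4, 1], [], [3]),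
([], [2, 4, 1], [3], []),
([], [2, 4, 1, 3], [], []),
([1, 4, 2], [], [], [3]),
([1, 4, 2], [], [3], []),
([1, 4, 2], [3], [], []),
([2], [], [], [1, 3, 4]),
([2], [], [], [1, 4, 3]),
([2], [], [], [3, 1, 4]),
([2], [], [], [3, 4, 1]),
([2], [], [], [4, 1, 3]),
([2], [], [], [4, 3, 1]),
([2], [], [1], [3, 4]),
([2], [], [1], [4, 3]),
([2], [], [1, 3], [4]),
([2], [], [1, 4], [3]),
([2], [], [1, 4, 3], []),
([2], [], [3], [1, 4]),
([2], [], [3], [4, 1]),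
([2], [], [3, 1], [4]),
([2], [], [3, 1, 4], []),
([2], [], [4], [1, 3]),
([2], [], [4], [3, 1]),
([2], [], [4, 1], [3]),
([2], [], [4, 1, 3], []),
([2], [], [4, 3], [1]),
([2], [], [4, 3, 1], []),
([2], [4], [], [1, 3]),
([2], [4], [], [3, 1]),
([2], [4], [1], [3]),
([2], [4], [1, 3], []),
([2], [4], [3], [1]),
([2], [4], [3, 1], []),
([2], [4, 1], [], [3]),
([2], [4, 1], [3], []),
([2], [4, 1, 3], [], []),
([3, 1, 4, 2], [], [], []),
([4, 2], [], [], [1, 3]),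
([4, 2], [], [], [3, 1]),
([4, 2], [], [1], [3]),
([4, 2], [], [1, 3], []),
([4, 2], [], [3], [1]),
([4, 2], [], [3, 1], []),
([4, 2], [1], [], [3]),
([4, 2], [1], [3], []),
([4, 2], [1, 3], [], [])]

set_option maxRecDepth 100000 in
lemma closed : ∀ s ∈ reachSet, ∀ t ∈ succs s, t ∈ reachSet := by decide

theorem stmt1 : ¬ PSSortable [3, 1, 4, 2] := by
  intro h
  have key : ∀ t : St, Relation.ReflTransGen PSStep ([3,1,4,2], [], [], []) t →
      t ∈ reachSet := by
    intro t ht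
    induction ht with
    | refl => decide
    | tail _ hstep ih => exact closed _ ih _ (step_mem_succs hstep)
  have := key _ h
  revert this
  decide
end

section
/- A permutation π can be sorted by two stacks in series if and only if its two-stack dual π^d, defined by π^d(i) = n+1−π^{−1}(n+1−i) for a permutation π of length n, can be sorted by two stacks in series. -/
/-- One step of the two-stacks-in-series machine.  State: (input, first stack, second stack, output);
stacks have their top at the head, output is appended at the end. -/
inductive TSStep : (List ℕ × List ℕ × List ℕ × List ℕ) → (List ℕ × List ℕ × List ℕ × List ℕ) → Prop
  | input (x : ℕ) (inp s1 s2 out : List ℕ) :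
      TSStep (x :: inp, s1, s2, out) (inp, x :: s1, s2, out)
  | transfer (inp : List ℕ) (x : ℕ) (s1 s2 out : List ℕ) :
      TSStep (inp, x :: s1, s2, out) (inp, s1, x :: s2, out)
  | output (inp s1 : List ℕ) (x : ℕ) (s2 out : List ℕ) :
      TSStep (inp, s1, x :: s2, out) (inp, s1, s2, out ++ [x])

/-- `p` can be sorted by two stacks in series. -/
def TSSortable (p : List ℕ) : Prop :=
  Relation.ReflTransGen TSStep (p, [], [], []) ([], [], [], List.range' 1 p.length)

/-- The one-line notation of a permutation of `Fin n`, with values `1, …, n`. -/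
def permToList {n : ℕ} (π : Equiv.Perm (Fin n)) : List ℕ :=
  (List.finRange n).map fun i => (π i : ℕ) + 1

/-- The reversal permutation `i ↦ n + 1 - i` (on `Fin n`, `i ↦ n - 1 - i`). -/
def revP (n : ℕ) : Equiv.Perm (Fin n) :=
  ⟨Fin.rev, Fin.rev, fun i => Fin.rev_rev i, fun i => Fin.rev_rev i⟩

/-- The two-stack dual `π^d(i) = n + 1 - π⁻¹(n + 1 - i)`. -/
def twoStackDual {n : ℕ} (π : Equiv.Perm (Fin n)) : Equiv.Perm (Fin n) :=
  ((revP n).trans π.symm).trans (revP n)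

/-- Relabel all values in a state by `f`. -/
def mapSt (f : ℕ → ℕ) (s : List ℕ × List ℕ × List ℕ × List ℕ) :
    List ℕ × List ℕ × List ℕ × List ℕ :=
  (s.1.map f, s.2.1.map f, s.2.2.1.map f, s.2.2.2.map f)

lemma tsstep_map (f : ℕ → ℕ) {a b} (h : TSStep a b) : TSStep (mapSt f a) (mapSt f b) := by
  cases h with
  | input x inp s1 s2 out =>
      simpa [mapSt] using TSStep.input (f x) (inp.map f) (s1.map f) (s2.map f) (out.map f)
  | transfer inp x s1 s2 out =>
      simpa [mapSt] using TSStep.transfer (inp.map f) (f x) (s1.map f) (s2.map f) (out.map f)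
  | output inp s1 x s2 out =>
      simpa [mapSt] using TSStep.output (inp.map f) (s1.map f) (f x) (s2.map f) (out.map f)

lemma rtg_map (f : ℕ → ℕ) {a b} (h : Relation.ReflTransGen TSStep a b) :
    Relation.ReflTransGen TSStep (mapSt f a) (mapSt f b) :=
  Relation.ReflTransGen.lift (mapSt f) (fun _ _ => tsstep_map f) _ _ h

/-- Time-reverse a state: output (reversed) becomes input, the two stacks swap. -/
def revSt (s : List ℕ × List ℕ × List ℕ × List ℕ) : List ℕ × List ℕ × List ℕ × List ℕ :=
  (s.2.2.2.reverse, s.2.2.1, s.2.1, s.1.reverse)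

lemma tsstep_rev {a b} (h : TSStep a b) : TSStep (revSt b) (revSt a) := by
  cases h with
  | input x inp s1 s2 out =>
      simpa [revSt] using TSStep.output out.reverse s2 x s1 inp.reverse
  | transfer inp x s1 s2 out =>
      simpa [revSt] using TSStep.transfer out.reverse x s2 s1 inp.reverse
  | output inp s1 x s2 out =>
      simpa [revSt] using TSStep.input x out.reverse s2 s1 inp.reverse

lemma rtg_rev {a b} (h : Relation.ReflTransGen TSStep a b) :
    Relation.ReflTransGen TSStep (revSt b) (revSt a) := by
  induction h with
  | refl => exact .refl
  | tail _ h2 ih => exact Relation.ReflTransGen.head (tsstep_rev h2) ih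

lemma len_permToList {n : ℕ} (π : Equiv.Perm (Fin n)) : (permToList π).length = n := by
  simp [permToList]

/-- The relabeling map `v ↦ n + 1 - π⁻¹(v)` (on values `1, …, n`). -/
def gmap {n : ℕ} (π : Equiv.Perm (Fin n)) : ℕ → ℕ :=
  fun v => if hv : v - 1 < n then n - (π.symm ⟨v - 1, hv⟩ : ℕ) else 0

lemma gmap_apply {n : ℕ} (π : Equiv.Perm (Fin n)) (j : Fin n) :
    gmap π ((j : ℕ) + 1) = n - (π.symm j : ℕ) := by
  unfold gmap
  simp only [Nat.add_sub_cancel]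
  rw [dif_pos j.isLt]

lemma sortable_dual {n : ℕ} (π : Equiv.Perm (Fin n)) (h : TSSortable (permToList π)) :
    TSSortable (permToList (twoStackDual π)) := by
  classical
  unfold TSSortable at h ⊢
  rw [len_permToList] at h ⊢
  have h3 := rtg_map (gmap π) (rtg_rev h)
  simp only [revSt, mapSt, List.map_nil, List.reverse_nil] at h3
  have e1 : (List.range' 1 n).reverse.map (gmap π) = permToList (twoStackDual π) := by
    apply List.ext_getElem
    · simp [permToList]
    · intro i h1 h2
      have hin : i < n := by
        simpa [len_permToList] using h2
      simp only [List.getElem_map, List.getElem_reverse, List.length_range',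
        List.getElem_range', one_mul, permToList, List.getElem_finRange, Fin.cast_mk]
      have harg : 1 + (n - 1 - i) = ((⟨n - 1 - i, by omega⟩ : Fin n) : ℕ) + 1 := by
        simp; omega
      rw [harg, gmap_apply]
      have hrev : twoStackDual π ⟨i, hin⟩
          = Fin.rev (π.symm (Fin.rev ⟨i, hin⟩)) := rfl
      rw [hrev]
      have h5 : Fin.rev (⟨i, hin⟩ : Fin n) = ⟨n - 1 - i, by omega⟩ := by
        ext; simp [Fin.val_rev]; omega
      rw [h5, Fin.val_rev]
      have := (π.symm (⟨n - 1 - i, by omega⟩ : Fin n)).isLt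
      omega
  have e2 : (permToList π).reverse.map (gmap π) = List.range' 1 n := by
    apply List.ext_getElem
    · simp [permToList]
    · intro i h1 h2
      have hin : i < n := by simpa using h2
      simp only [List.getElem_map, List.getElem_reverse, len_permToList, permToList,
        List.length_map, List.length_finRange, List.getElem_finRange, Fin.cast_mk,
        List.getElem_range', one_mul]
      rw [gmap_apply, Equiv.symm_apply_apply]
      simp only [Fin.coe_cast, Fin.val_mk]
      omega
  rw [e1, e2] at h3
  exact h3

lemma dual_dual {n : ℕ} (π : Equiv.Perm (Fin n)) : twoStackDual (twoStackDual π) = π := by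
  ext i
  simp [twoStackDual, revP, Equiv.trans_apply, Fin.rev_rev]

theorem stmt3 (n : ℕ) (π : Equiv.Perm (Fin n)) :
    TSSortable (permToList π) ↔ TSSortable (permToList (twoStackDual π)) := by
  constructor
  · exact sortable_dual π
  · intro h
    have h2 := sortable_dual (twoStackDual π) h
    rwa [dual_dual] at h2
end

section
/- Adding a queue between a stack and any subsequent sorting machine M does not change the set of sortable permutations: a permutation is sortable by the machine SM (stack then M) if and only if it is sortable by SQM (stack, then queue, then M). In particular, the machines SP (stack then pop stack) and SQP (stack, queue, pop stack) sort exactly the same permutations. -/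
/-- An abstract sorting machine: a state space with an initial state, a relation for
reading (consuming) an input entry, a relation for emitting an output entry, and
silent internal moves. -/
structure Machine where
  S : Type
  init : S
  read : S → ℕ → S → Prop
  emit : S → ℕ → S → Prop
  tau : S → S → Prop

/-- `Run M s inp out t`: starting from state `s`, the machine `M` can consume the
input sequence `inp` (in order), emit the output sequence `out` (in order, arbitrarily
interleaved with the reads), and end in state `t`. -/
inductive Run (M : Machine) : M.S → List ℕ → List ℕ → M.S → Prop
  | refl (s : M.S) : Run M s [] [] s
  | read {s t u : M.S} {x : ℕ} {inp out : List ℕ} :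
      M.read s x t → Run M t inp out u → Run M s (x :: inp) out u
  | emit {s t u : M.S} {x : ℕ} {inp out : List ℕ} :
      M.emit s x t → Run M t inp out u → Run M s inp (x :: out) u
  | tau {s t u : M.S} {inp out : List ℕ} :
      M.tau s t → Run M t inp out u → Run M s inp out u

/-- `M` can sort `p`: consuming `p`, it can output `1, …, p.length`. -/
def MSortable (M : Machine) (p : List ℕ) : Prop :=
  ∃ s, Run M M.init p (List.range' 1 p.length) s

/-- A stack (top at the head) feeding directly into the machine `M`. -/
def stackThen (M : Machine) : Machine where
  S := List ℕ × M.S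
  init := ([], M.init)
  read := fun s x t => t.1 = x :: s.1 ∧ t.2 = s.2
  emit := fun s x t => M.emit s.2 x t.2 ∧ t.1 = s.1
  tau := fun s t =>
    (∃ x r, s.1 = x :: r ∧ t.1 = r ∧ M.read s.2 x t.2) ∨ (t.1 = s.1 ∧ M.tau s.2 t.2)

/-- A stack, followed by a queue (front at the head), feeding into the machine `M`. -/
def stackQueueThen (M : Machine) : Machine where
  S := List ℕ × List ℕ × M.S
  init := ([], [], M.init)
  read := fun s x t => t.1 = x :: s.1 ∧ t.2 = s.2
  emit := fun s x t => M.emit s.2.2 x t.2.2 ∧ t.1 = s.1 ∧ t.2.1 = s.2.1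
  tau := fun s t =>
    (∃ x r, s.1 = x :: r ∧ t.1 = r ∧ t.2.1 = s.2.1 ++ [x] ∧ t.2.2 = s.2.2) ∨
    (∃ x r, s.2.1 = x :: r ∧ t.2.1 = r ∧ t.1 = s.1 ∧ M.read s.2.2 x t.2.2) ∨
    (t.1 = s.1 ∧ t.2.1 = s.2.1 ∧ M.tau s.2.2 t.2.2)

/-- A pop stack as a machine.  State: (contents, pending-output buffer), both top-first.
It can only read while not in the middle of emptying; the internal move pops the whole
stack into the buffer, whose entries are then emitted in order. -/
def popStackM : Machine where
  S := List ℕ × List ℕ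
  init := ([], [])
  read := fun s x t => s.2 = [] ∧ t = (x :: s.1, [])
  emit := fun s x t => ∃ r, s.2 = x :: r ∧ t = (s.1, r)
  tau := fun s t => s.1 ≠ [] ∧ t = ([], s.1)

/-- A pure stack machine: read = push, emit = pop. -/
def StackOnly : Machine where
  S := List ℕ
  init := []
  read := fun s x t => t = x :: s
  emit := fun s x t => s = x :: t
  tau := fun _ _ => False

theorem run_append {M : Machine} {s t : M.S} {inp₁ out₁ : List ℕ}
    (h1 : Run M s inp₁ out₁ t) :
    ∀ {inp₂ out₂ : List ℕ} {u : M.S}, Run M t inp₂ out₂ u →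
      Run M s (inp₁ ++ inp₂) (out₁ ++ out₂) u := by
  induction h1 with
  | refl s => intro _ _ _ h2; simpa using h2
  | read h _ ih => intro _ _ _ h2; exact .read h (ih h2)
  | emit h _ ih => intro _ _ _ h2; exact .emit h (ih h2)
  | tau h _ ih => intro _ _ _ h2; exact .tau h (ih h2)

/-- Peel an input-consuming run: decompose into a silent/emitting prefix, the first
read, and the rest. -/
theorem run_peel {M : Machine} {m m' : M.S} {inp out : List ℕ}
    (h : Run M m inp out m') :
    ∀ x w, inp = x :: w →
      ∃ out₁ out₂ m₁ m₂, out = out₁ ++ out₂ ∧ Run M m [] out₁ m₁ ∧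
        M.read m₁ x m₂ ∧ Run M m₂ w out₂ m' := by
  induction h with
  | refl s => intro x w h; cases h
  | read hr hrun ih =>
      intro x w h
      injection h with h1 h2
      subst h1; subst h2
      exact ⟨[], _, _, _, rfl, .refl _, hr, hrun⟩
  | emit he _ ih =>
      intro x w h
      obtain ⟨o1, o2, m1, m2, rfl, a, b, c⟩ := ih x w h
      exact ⟨_ :: o1, o2, m1, m2, rfl, .emit he a, b, c⟩
  | tau ht _ ih =>
      intro x w h
      obtain ⟨o1, o2, m1, m2, rfl, a, b, c⟩ := ih x w h
      exact ⟨o1, o2, m1, m2, rfl, .tau ht a, b, c⟩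

theorem lift_nil_SM {M : Machine} {m m' : M.S} {inp out : List ℕ}
    (h : Run M m inp out m') (hi : inp = []) (st : List ℕ) :
    Run (stackThen M) (st, m) [] out (st, m') := by
  induction h with
  | refl s => exact .refl _
  | read hr _ ih => cases hi
  | emit he _ ih => refine .emit ?_ (ih hi); exact ⟨he, rfl⟩
  | tau ht _ ih => refine .tau ?_ (ih hi); exact Or.inr ⟨rfl, ht⟩

theorem lift_nil_SQM {M : Machine} {m m' : M.S} {inp out : List ℕ}
    (h : Run M m inp out m') (hi : inp = []) (st q : List ℕ) :
    Run (stackQueueThen M) (st, q, m) [] out (st, q, m') := by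
  induction h with
  | refl s => exact .refl _
  | read hr _ ih => cases hi
  | emit he _ ih => refine .emit ?_ (ih hi); exact ⟨he, rfl, rfl⟩
  | tau ht _ ih => refine .tau ?_ (ih hi); exact Or.inr (Or.inr ⟨rfl, rfl, ht⟩)

/-- A stack can always consume its whole input without emitting. -/
theorem push_all : ∀ (inp st : List ℕ), ∃ st'', Run StackOnly st inp [] st'' := by
  intro inp
  induction inp with
  | nil => exact fun st => ⟨st, Run.refl (M := StackOnly) st⟩
  | cons x l ih =>
      intro st
      obtain ⟨st'', h⟩ := ih (x :: st)
      exact ⟨st'', .read rfl h⟩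

/-- A stack run can be truncated to emit only a prefix of its output. -/
theorem stack_truncate {st st' : StackOnly.S} {inp out : List ℕ}
    (h : Run StackOnly st inp out st') :
    ∀ v r, out = v ++ r → ∃ st'', Run StackOnly st inp v st'' := by
  induction h with
  | refl s =>
      intro v r hv
      obtain ⟨rfl, rfl⟩ := List.append_eq_nil_iff.mp hv.symm
      exact ⟨s, .refl s⟩
  | read hr _ ih =>
      intro v r hv
      obtain ⟨st'', h⟩ := ih v r hv
      exact ⟨st'', .read hr h⟩
  | emit he _ ih =>
      intro v r hv
      cases v with
      | nil => exact push_all _ _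
      | cons y v' =>
          injection hv with h1 h2
          subst h1
          obtain ⟨st'', h⟩ := ih v' r h2
          exact ⟨st'', .emit he h⟩
  | tau ht _ ih => exact ht.elim

theorem SM_decompose {M : Machine} {s s' : (stackThen M).S} {inp out : List ℕ}
    (h : Run (stackThen M) s inp out s') :
    ∃ w, Run StackOnly s.1 inp w s'.1 ∧ Run M s.2 w out s'.2 := by
  induction h with
  | refl s => exact ⟨[], .refl _, .refl _⟩
  | read hr _ ih =>
      obtain ⟨w, a, b⟩ := ih
      exact ⟨w, .read hr.1 a, hr.2 ▸ b⟩
  | emit he _ ih =>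
      obtain ⟨w, a, b⟩ := ih
      exact ⟨w, he.2 ▸ a, .emit he.1 b⟩
  | tau ht _ ih =>
      obtain ⟨w, a, b⟩ := ih
      rcases ht with ⟨x, r, h1, h2, h3⟩ | ⟨h1, h2⟩
      · exact ⟨x :: w, .emit (show StackOnly.emit _ x _ by rw [h1, h2]; exact rfl) a, .read h3 b⟩
      · exact ⟨w, h1 ▸ a, .tau h2 b⟩

theorem SQM_decompose {M : Machine} {s s' : (stackQueueThen M).S} {inp out : List ℕ}
    (h : Run (stackQueueThen M) s inp out s') :
    ∃ w v, s.2.1 ++ w = v ++ s'.2.1 ∧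
      Run StackOnly s.1 inp w s'.1 ∧ Run M s.2.2 v out s'.2.2 := by
  induction h with
  | refl s => exact ⟨[], [], by simp, .refl _, .refl _⟩
  | read hr _ ih =>
      obtain ⟨w, v, he, a, b⟩ := ih
      refine ⟨w, v, ?_, .read hr.1 a, ?_⟩
      · rw [show _ = _ from congrArg Prod.fst hr.2] at he; exact he
      · rw [show _ = _ from congrArg Prod.snd hr.2] at b; exact b
  | emit he' _ ih =>
      obtain ⟨w, v, he, a, b⟩ := ih
      exact ⟨w, v, he'.2.2 ▸ he, he'.2.1 ▸ a, .emit he'.1 b⟩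
  | tau ht _ ih =>
      obtain ⟨w, v, he, a, b⟩ := ih
      rcases ht with ⟨x, r, h1, h2, h3, h4⟩ | ⟨x, r, h1, h2, h3, h4⟩ | ⟨h1, h2, h3⟩
      · refine ⟨x :: w, v, ?_, .emit (show StackOnly.emit _ x _ by rw [h1, h2]; exact rfl) a,
          h4 ▸ b⟩
        rw [h3] at he; simpa using he
      · refine ⟨w, x :: v, ?_, h3 ▸ a, .read h4 b⟩
        rw [h2] at he; rw [h1]; simpa using he
      · exact ⟨w, v, h2 ▸ he, h1 ▸ a, .tau h3 b⟩

theorem SM_compose {M : Machine} {st st' : StackOnly.S} {inp w : List ℕ}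
    (hs : Run StackOnly st inp w st') :
    ∀ {m out m'}, Run M m w out m' →
      Run (stackThen M) (st, m) inp out (st', m') := by
  induction hs with
  | refl st => intro m out m' hm; exact lift_nil_SM hm rfl st
  | read hr _ ih =>
      intro m out m' hm
      refine .read ?_ (ih hm); exact ⟨hr, rfl⟩
  | @emit sa ta ua xa inpa outa he hrest ih =>
      intro m out m' hm
      obtain ⟨o1, o2, m1, m2, rfl, a, b, c⟩ := run_peel hm _ _ rfl
      have h1 := lift_nil_SM a rfl sa
      have h2 : (stackThen M).tau (sa, m1) (ta, m2) := Or.inl ⟨xa, ta, he, rfl, b⟩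
      simpa using run_append h1 (.tau h2 (ih c))
  | tau ht _ ih => exact ht.elim

theorem SQM_compose {M : Machine} {st st' : StackOnly.S} {inp w : List ℕ}
    (hs : Run StackOnly st inp w st') :
    ∀ {m out m'}, Run M m w out m' →
      Run (stackQueueThen M) (st, [], m) inp out (st', [], m') := by
  induction hs with
  | refl st => intro m out m' hm; exact lift_nil_SQM hm rfl st []
  | read hr _ ih =>
      intro m out m' hm
      refine .read ?_ (ih hm); exact ⟨hr, rfl⟩
  | @emit sa ta ua xa inpa outa he hrest ih =>
      intro m out m' hm
      obtain ⟨o1, o2, m1, m2, rfl, a, b, c⟩ := run_peel hm _ _ rfl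
      have h1 := lift_nil_SQM a rfl sa []
      have h2 : (stackQueueThen M).tau (sa, [], m1) (ta, [xa], m1) :=
        Or.inl ⟨xa, ta, he, rfl, rfl, rfl⟩
      have h3 : (stackQueueThen M).tau (ta, [xa], m1) (ta, [], m2) :=
        Or.inr (Or.inl ⟨xa, [], rfl, rfl, rfl, b⟩)
      simpa using run_append h1 (.tau h2 (.tau h3 (ih c)))
  | tau ht _ ih => exact ht.elim

theorem stmt4 :
    (∀ (M : Machine) (p : List ℕ), MSortable (stackThen M) p ↔ MSortable (stackQueueThen M) p) ∧
    (∀ p : List ℕ, MSortable (stackThen popStackM) p ↔ MSortable (stackQueueThen popStackM) p) := by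

  have main : ∀ (M : Machine) (p : List ℕ),
      MSortable (stackThen M) p ↔ MSortable (stackQueueThen M) p := by
    intro M p
    constructor
    · rintro ⟨s, h⟩
      obtain ⟨w, a, b⟩ := SM_decompose h
      exact ⟨(s.1, [], s.2), SQM_compose a b⟩
    · rintro ⟨s, h⟩
      obtain ⟨w, v, he, a, b⟩ := SQM_decompose h
      obtain ⟨st'', a'⟩ := stack_truncate a v s.2.1 (by simpa [stackQueueThen] using he)
      exact ⟨(st'', s.2.2), SM_compose a' b⟩
  exact ⟨main, fun p => main popStackM p⟩
end

section
/- For every m ≥ 2, the parallel alternation 2,4,6,...,2m,1,3,5,...,2m−1 is a simple permutation and avoids both 2431 and 3142. -/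
/-- `u` and `v` have the same length and are order isomorphic (same relative order of entries). -/
def OrderIsoList (u v : List ℕ) : Prop :=
  u.length = v.length ∧ ∀ i j, i < u.length → j < u.length →
    (u.getD i 0 < u.getD j 0 ↔ v.getD i 0 < v.getD j 0)

/-- `p` contains the pattern `q`: some subsequence of `p` is order isomorphic to `q`. -/
def ContainsPat (p q : List ℕ) : Prop := ∃ s : List ℕ, s.Sublist p ∧ OrderIsoList s q

def AvoidsPat (p q : List ℕ) : Prop := ¬ ContainsPat p q

/-- `p` is a permutation of the values `1, …, p.length`. -/
def IsPermList (p : List ℕ) : Prop := p.Perm (List.range' 1 p.length)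

/-- The parallel alternation `2, 4, …, 2m, 1, 3, …, 2m-1` (in one-line list form). -/
def parAlt (m : ℕ) : List ℕ :=
  ((List.range' 1 m).map (fun i => 2 * i)) ++ ((List.range' 1 m).map (fun i => 2 * i - 1))

/-- The `len` consecutive positions of `p` starting at `i` carry consecutive values,
i.e. they form an interval (block) of `p`. -/
def SegIsInterval (p : List ℕ) (i len : ℕ) : Prop :=
  ∃ a, ((p.drop i).take len).Perm (List.range' a len)

/-- `p` is simple: no set of consecutive positions of size strictly between 1 and
`p.length` carries consecutive values. -/
def IsSimpleList (p : List ℕ) : Prop :=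
  ∀ i len, i + len ≤ p.length → 2 ≤ len → len < p.length → ¬ SegIsInterval p i len

/-- Value of the parallel alternation at position `k` (0-indexed). -/
def pv (m k : ℕ) : ℕ := if k < m then 2 * (k + 1) else 2 * (k - m) + 1

lemma parAlt_length (m : ℕ) : (parAlt m).length = 2 * m := by
  simp [parAlt]; omega

lemma parAlt_getElem (m k : ℕ) (h : k < (parAlt m).length) :
    (parAlt m)[k] = pv m k := by
  have hk : k < 2 * m := by rwa [parAlt_length] at h
  unfold pv; simp only [parAlt]
  by_cases hkm : k < m
  · rw [List.getElem_append_left (by simpa using hkm)]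
    simp [List.getElem_range', hkm]
    omega
  · rw [List.getElem_append_right (by simpa using hkm)]
    simp [List.getElem_range', hkm]
    omega

lemma descent (m k1 k2 : ℕ) (h12 : k1 < k2) (hv : pv m k2 < pv m k1) :
    k1 < m ∧ m ≤ k2 := by
  unfold pv at hv
  split_ifs at hv <;> omega

lemma extract4 (m : ℕ) (s : List ℕ) (hs : s.Sublist (parAlt m)) (h4 : s.length = 4) :
    ∃ a b c d : ℕ, a < b ∧ b < c ∧ c < d ∧ d < 2 * m ∧
      s = [pv m a, pv m b, pv m c, pv m d] := by
  obtain ⟨is, hmap, hpw⟩ := List.sublist_eq_map_getElem hs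
  have hlen : is.length = 4 := by
    have := congrArg List.length hmap
    simpa [h4] using this.symm
  rcases is with _ | ⟨a, _ | ⟨b, _ | ⟨c, _ | ⟨d, _ | t⟩⟩⟩⟩ <;> simp at hlen
  refine ⟨a, b, c, d, ?_, ?_, ?_, ?_, ?_⟩
  · simpa using (List.pairwise_cons.1 hpw).1 b (by simp)
  · simpa using (List.pairwise_cons.1 (List.pairwise_cons.1 hpw).2).1 c (by simp)
  · simpa using
      (List.pairwise_cons.1 (List.pairwise_cons.1 (List.pairwise_cons.1 hpw).2).2).1 d (by simp)
  · have := d.isLt; simpa [parAlt_length] using this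
  · rw [hmap]
    simp [parAlt_getElem]

lemma avoid2431 (m : ℕ) : AvoidsPat (parAlt m) [2, 4, 3, 1] := by
  rintro ⟨s, hs, hlen, hiso⟩
  simp only [List.length_cons, List.length_nil] at hlen
  obtain ⟨a, b, c, d, hab, hbc, hcd, hd, rfl⟩ := extract4 m s hs hlen
  have h30 : pv m d < pv m a := by
    have := (hiso 3 0 (by simp [hlen]) (by simp [hlen])).2 (by norm_num)
    simpa using this
  have h02 : pv m a < pv m c := by
    have := (hiso 0 2 (by simp [hlen]) (by simp [hlen])).2 (by norm_num)
    simpa using this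
  have h21 : pv m c < pv m b := by
    have := (hiso 2 1 (by simp [hlen]) (by simp [hlen])).2 (by norm_num)
    simpa using this
  have had : a < m ∧ m ≤ d := descent m a d (by omega) h30
  have hbcm : b < m ∧ m ≤ c := descent m b c hbc h21
  have ham : a < m := had.1
  have hcm : m ≤ c := hbcm.2
  have hdm : m ≤ d := had.2
  unfold pv at h30 h02
  rw [if_pos ham, if_neg (by omega)] at h30
  rw [if_pos ham, if_neg (by omega)] at h02
  omega

lemma avoid3142 (m : ℕ) : AvoidsPat (parAlt m) [3, 1, 4, 2] := by
  rintro ⟨s, hs, hlen, hiso⟩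
  simp only [List.length_cons, List.length_nil] at hlen
  obtain ⟨a, b, c, d, hab, hbc, hcd, hd, rfl⟩ := extract4 m s hs hlen
  have h10 : pv m b < pv m a := by
    have := (hiso 1 0 (by simp [hlen]) (by simp [hlen])).2 (by norm_num)
    simpa using this
  have h32 : pv m d < pv m c := by
    have := (hiso 3 2 (by simp [hlen]) (by simp [hlen])).2 (by norm_num)
    simpa using this
  have hab' : a < m ∧ m ≤ b := descent m a b hab h10
  have hcd' : c < m ∧ m ≤ d := descent m c d hcd h32
  omega

theorem stmt8 (m : ℕ) (hm : 2 ≤ m) :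
    IsSimpleList (parAlt m) ∧ AvoidsPat (parAlt m) [2, 4, 3, 1] ∧
      AvoidsPat (parAlt m) [3, 1, 4, 2] := by
  refine ⟨?_, avoid2431 m, avoid3142 m⟩
  intro i len hle h2 hlt ⟨a, hperm⟩
  rw [parAlt_length] at hle hlt
  set L := ((parAlt m).drop i).take len with hL
  have hLlen : L.length = len := by
    simp [hL, parAlt_length]; omega
  have hmemL : ∀ x, x ∈ L → ∃ k < len, pv m (i + k) = x := by
    intro x hx
    obtain ⟨k, hk, hkx⟩ := List.mem_iff_getElem.1 hx
    refine ⟨k, by omega, ?_⟩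
    rw [hLlen] at hk
    simp only [hL, List.getElem_take, List.getElem_drop, parAlt_getElem] at hkx
    exact hkx
  have hmemL' : ∀ k, k < len → pv m (i + k) ∈ L := by
    intro k hk
    rw [List.mem_iff_getElem]
    refine ⟨k, by omega, ?_⟩
    simp only [hL, List.getElem_take, List.getElem_drop, parAlt_getElem]
  by_cases h1 : i + len ≤ m
  · -- all even
    have ha : a ∈ L := hperm.mem_iff.2 (List.mem_range'.2 ⟨0, by omega, by omega⟩)
    have ha1 : a + 1 ∈ L := hperm.mem_iff.2 (List.mem_range'.2 ⟨1, by omega, by omega⟩)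
    obtain ⟨k, hk, hkv⟩ := hmemL a ha
    obtain ⟨k', hk', hkv'⟩ := hmemL (a + 1) ha1
    unfold pv at hkv hkv'
    rw [if_pos (by omega)] at hkv
    rw [if_pos (by omega)] at hkv'
    omega
  · by_cases h2' : m ≤ i
    · -- all odd
      have ha : a ∈ L := hperm.mem_iff.2 (List.mem_range'.2 ⟨0, by omega, by omega⟩)
      have ha1 : a + 1 ∈ L := hperm.mem_iff.2 (List.mem_range'.2 ⟨1, by omega, by omega⟩)
      obtain ⟨k, hk, hkv⟩ := hmemL a ha
      obtain ⟨k', hk', hkv'⟩ := hmemL (a + 1) ha1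
      unfold pv at hkv hkv'
      rw [if_neg (by omega)] at hkv
      rw [if_neg (by omega)] at hkv'
      omega
    · -- straddles: contains 2m and 1
      have hv1 : pv m (i + (m - 1 - i)) = 2 * m := by
        unfold pv; rw [if_pos (by omega)]; omega
      have hv2 : pv m (i + (m - i)) = 1 := by
        unfold pv; rw [if_neg (by omega)]; omega
      have hmem1 : (2 * m : ℕ) ∈ L := hv1 ▸ hmemL' _ (by omega)
      have hmem2 : (1 : ℕ) ∈ L := hv2 ▸ hmemL' _ (by omega)
      obtain ⟨j1, hj1, hj1'⟩ := List.mem_range'.1 (hperm.mem_iff.1 hmem1)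
      obtain ⟨j2, hj2, hj2'⟩ := List.mem_range'.1 (hperm.mem_iff.1 hmem2)
      omega
end

section
/- A permutation is sortable by the PS machine (a pop stack followed directly by a stack) if and only if it avoids the three patterns 2431, 3142, and 3241. -/
inductive Mach : List ℕ → List ℕ → ℕ → Prop
  | done (next : ℕ) : Mach [] [] next
  | pop (inp st : List ℕ) (next : ℕ) : Mach inp st (next+1) → Mach inp (next :: st) next
  | push (B inp st : List ℕ) (next : ℕ) (hB : B ≠ []) (hchain : (B ++ st).Chain' (· < ·)) :
      Mach inp (B ++ st) next → Mach (B ++ inp) st next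

lemma read_block (B : List ℕ) : ∀ (inp ps st out : List ℕ),
    Relation.ReflTransGen PSStep (B ++ inp, ps, st, out) (inp, B.reverse ++ ps, st, out) := by
  induction B with
  | nil => intro inp ps st out; simp; exact Relation.ReflTransGen.refl
  | cons x B ih =>
      intro inp ps st out
      refine Relation.ReflTransGen.head (PSStep.input x (B ++ inp) ps st out) ?_
      simpa using ih inp (x :: ps) st out

lemma mach_to_rtg {inp st : List ℕ} {next : ℕ} (h : Mach inp st next) : ∀ out : List ℕ,
    Relation.ReflTransGen PSStep (inp, [], st, out)
      ([], [], [], out ++ List.range' next (inp.length + st.length)) := by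
  induction h with
  | done next => intro out; simp; exact Relation.ReflTransGen.refl
  | pop inp st next _ ih =>
      intro out
      refine Relation.ReflTransGen.head (PSStep.output inp [] st out next) ?_
      have := ih (out ++ [next])
      rw [List.length_cons, ← Nat.add_assoc, List.range'_succ]
      simpa [List.append_assoc] using this
  | push B inp st next hB hchain _ ih =>
      intro out
      refine (read_block B inp [] st out).trans ?_
      refine Relation.ReflTransGen.head
        (PSStep.transfer inp (B.reverse ++ []) st out (by simpa using hB)) ?_
      have := ih out
      have hl : inp.length + (B ++ st).length = (B ++ inp).length + st.length := by
        simp; omega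
      rw [hl] at this
      simpa using this


lemma rtg_sublist {fin : List ℕ} : ∀ {s : List ℕ × List ℕ × List ℕ × List ℕ},
    Relation.ReflTransGen PSStep s ([], [], [], fin) →
    ∀ inp ps st out, s = (inp, ps, st, out) → ∃ R, fin = out ++ R ∧ st.Sublist R := by
  intro s h
  induction h using Relation.ReflTransGen.head_induction_on with
  | refl =>
      intro inp ps st out he
      injection he with h1 he; injection he with h2 he; injection he with h3 h4
      subst h3 h4
      exact ⟨[], by simp⟩
  | head h' _ ih =>
      intro inp ps st out he
      subst he
      cases h' with
      | input x inp' ps st out => exact ih inp' (x :: ps) st out rfl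
      | transfer inp ps st out hne =>
          obtain ⟨R, hR, hsub⟩ := ih inp [] (ps.reverse ++ st) out rfl
          exact ⟨R, hR, ((List.sublist_append_right _ _).trans hsub)⟩
      | output inp ps st out x =>
          obtain ⟨R, hR, hsub⟩ := ih inp ps st (out ++ [x]) rfl
          exact ⟨x :: R, by simpa using hR, hsub.cons₂ x⟩

lemma rtg_to_mach {fin : List ℕ} : ∀ {s : List ℕ × List ℕ × List ℕ × List ℕ},
    Relation.ReflTransGen PSStep s ([], [], [], fin) →
    ∀ inp ps st out next, s = (inp, ps, st, out) →
      fin = out ++ List.range' next (inp.length + ps.length + st.length) →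
      Mach (ps.reverse ++ inp) st next := by
  intro s h
  induction h using Relation.ReflTransGen.head_induction_on with
  | refl =>
      intro inp ps st out next he hf
      injection he with h1 he; injection he with h2 he; injection he with h3 h4
      subst h1 h2 h3
      exact Mach.done next
  | head h' htail ih =>
      intro inp ps st out next he hf
      subst he
      cases h' with
      | input x inp' ps st out =>
          have := ih inp' (x :: ps) st out next rfl (by
            rw [hf]; congr 1; congr 1; simp; omega)
          simpa using this
      | transfer inp ps st out hne =>
          have hm := ih inp [] (ps.reverse ++ st) out next rfl (by
            rw [hf]; congr 1; congr 1; simp; omega)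
          simp at hm
          -- chain condition from sublist
          obtain ⟨R, hR, hsub⟩ := rtg_sublist htail inp [] (ps.reverse ++ st) out rfl
          have hReq : R = List.range' next (inp.length + ps.length + st.length) := by
            rw [hf] at hR; exact (List.append_cancel_left hR).symm
          have hpw : (ps.reverse ++ st).Pairwise (· < ·) := by
            refine List.Pairwise.sublist hsub ?_
            rw [hReq]; exact List.pairwise_lt_range'
          have hchain : ((ps.reverse) ++ st).Chain' (· < ·) := List.isChain_iff_pairwise.2 hpw
          exact Mach.push ps.reverse inp st next (by simpa using hne) hchain hm
      | output inp ps st out x =>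
          obtain ⟨R, hR, hsub⟩ := rtg_sublist htail inp ps st (out ++ [x]) rfl
          have hlen : inp.length + ps.length + (x :: st).length
              = (inp.length + ps.length + st.length) + 1 := by simp; omega
          rw [hlen, List.range'_succ] at hf
          have hx : x = next ∧ R = List.range' (next+1) (inp.length + ps.length + st.length) := by
            rw [hf] at hR
            have := hR
            rw [List.append_assoc] at this
            have h2 := List.append_cancel_left this
            simp at h2
            exact ⟨h2.1.symm, h2.2.symm⟩
          obtain ⟨hx1, hx2⟩ := hx
          subst hx1
          have hm := ih inp ps st (out ++ [x]) (x+1) rfl (by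
            rw [hf]; simp)
          exact Mach.pop _ _ _ hm


def Has2431 (p : List ℕ) : Prop := ∃ a b c d : ℕ, [b,d,c,a].Sublist p ∧ a<b ∧ b<c ∧ c<d
def Has3142 (p : List ℕ) : Prop := ∃ a b c d : ℕ, [c,a,d,b].Sublist p ∧ a<b ∧ b<c ∧ c<d
def Has3241 (p : List ℕ) : Prop := ∃ a b c d : ℕ, [c,b,d,a].Sublist p ∧ a<b ∧ b<c ∧ c<d
def NoF (inp : List ℕ) (s : ℕ) : Prop := ∀ d b : ℕ, [d,b].Sublist inp → b < s → s < d → False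

lemma split4 {w x y z : ℕ} {L R : List ℕ} (h : [w,x,y,z].Sublist (L ++ R)) :
    [w,x,y,z].Sublist R ∨
    ([w].Sublist L ∧ [x,y,z].Sublist R) ∨
    ([w,x].Sublist L ∧ [y,z].Sublist R) ∨
    ([w,x,y].Sublist L ∧ [z].Sublist R) ∨
    [w,x,y,z].Sublist L := by
  obtain ⟨l₁, l₂, heq, h1, h2⟩ := List.sublist_append_iff.1 h
  rcases l₁ with _ | ⟨a1, _ | ⟨a2, _ | ⟨a3, _ | ⟨a4, _ | ⟨a5, t⟩⟩⟩⟩⟩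
  · simp only [List.nil_append] at heq; subst heq; exact Or.inl h2
  · simp only [List.cons_append, List.nil_append, List.cons.injEq] at heq
    obtain ⟨rfl, rfl⟩ := heq; exact Or.inr (Or.inl ⟨h1, h2⟩)
  · simp only [List.cons_append, List.nil_append, List.cons.injEq] at heq
    obtain ⟨rfl, rfl, rfl⟩ := heq; exact Or.inr (Or.inr (Or.inl ⟨h1, h2⟩))
  · simp only [List.cons_append, List.nil_append, List.cons.injEq] at heq
    obtain ⟨rfl, rfl, rfl, rfl⟩ := heq; exact Or.inr (Or.inr (Or.inr (Or.inl ⟨h1, h2⟩)))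
  · simp only [List.cons_append, List.nil_append, List.cons.injEq] at heq
    obtain ⟨rfl, rfl, rfl, rfl, heq⟩ := heq
    exact Or.inr (Or.inr (Or.inr (Or.inr h1)))
  · exfalso; have := congrArg List.length heq; simp at this

lemma split2 {w x : ℕ} {L R : List ℕ} (h : [w,x].Sublist (L ++ R)) :
    [w,x].Sublist R ∨ ([w].Sublist L ∧ [x].Sublist R) ∨ [w,x].Sublist L := by
  obtain ⟨l₁, l₂, heq, h1, h2⟩ := List.sublist_append_iff.1 h
  rcases l₁ with _ | ⟨a1, _ | ⟨a2, t⟩⟩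
  · simp only [List.nil_append] at heq; subst heq; exact Or.inl h2
  · simp only [List.cons_append, List.nil_append, List.cons.injEq] at heq
    obtain ⟨rfl, rfl⟩ := heq; exact Or.inr (Or.inl ⟨h1, h2⟩)
  · simp only [List.cons_append, List.nil_append, List.cons.injEq] at heq
    obtain ⟨rfl, rfl, heq⟩ := heq
    have ht : t = [] := by
      cases t with
      | nil => rfl
      | cons u v => exact absurd heq (by simp)
    subst ht
    exact Or.inr (Or.inr h1)

theorem mach_inv {inp st : List ℕ} {next : ℕ} (h : Mach inp st next) :
    (inp ++ st).Perm (List.range' next (inp.length + st.length)) →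
    (¬Has2431 inp ∧ ¬Has3142 inp ∧ ¬Has3241 inp) ∧ ∀ s ∈ st, NoF inp s := by
  induction h with
  | done next =>
      intro _
      refine ⟨⟨?_, ?_, ?_⟩, by simp⟩ <;> rintro ⟨a, b, c, d, hs, -⟩ <;> simp at hs
  | pop inp st next hm ih =>
      intro hV
      have e : inp.length + (next :: st).length = inp.length + st.length + 1 := by
        rw [List.length_cons]; omega
      rw [e, List.range'_succ] at hV
      have h3 : (next :: (inp ++ st)).Perm
          (next :: List.range' (next+1) (inp.length + st.length)) :=
        List.perm_middle.symm.trans hV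
      obtain ⟨hpat, hF⟩ := ih h3.cons_inv
      refine ⟨hpat, ?_⟩
      intro s hs
      rcases List.mem_cons.1 hs with rfl | hs
      · intro d b hsub hb hd
        have hbmem : b ∈ inp := hsub.subset (by simp)
        have : b ∈ _ :=
          h3.subset (List.mem_cons_of_mem _ (List.mem_append_left st hbmem))
        rcases List.mem_cons.1 this with rfl | hmem
        · omega
        · have := (List.mem_range'_1.1 hmem).1; omega
      · exact hF s hs
  | push B inp st next hB hchain hm ih =>
      intro hV
      have hV' : (inp ++ (B ++ st)).Perm
          (List.range' next (inp.length + (B ++ st).length)) := by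
      -- rearrange
        have e : (B ++ inp).length + st.length = inp.length + (B ++ st).length := by
          simp; omega
        rw [e] at hV
        refine List.Perm.trans ?_ hV
        rw [← List.append_assoc]
        exact (List.perm_append_comm).append_right st
      obtain ⟨⟨hP1, hP2, hP3⟩, hF⟩ := ih hV'
      have hpw : (B ++ st).Pairwise (· < ·) := List.isChain_iff_pairwise.1 hchain
      obtain ⟨hpwB, hpwst, hcross⟩ := List.pairwise_append.1 hpw
      refine ⟨⟨?_, ?_, ?_⟩, ?_⟩
      · rintro ⟨a, b, c, d, hsub, h1, h2, h3⟩
        rcases split4 hsub with h | ⟨hb, hr⟩ | ⟨hbd, hr⟩ | ⟨hbdc, hr⟩ | hall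
        · exact hP1 ⟨a, b, c, d, h, h1, h2, h3⟩
        · have hbB : b ∈ B := hb.subset (by simp)
          have hda : [d,a].Sublist inp :=
            (List.Sublist.cons₂ d (List.sublist_cons_self c [a])).trans hr
          exact hF b (List.mem_append_left st hbB) d a hda h1 (h2.trans h3)
        · have hbB : b ∈ B := hbd.subset (by simp)
          exact hF b (List.mem_append_left st hbB) c a hr h1 h2
        · have := hpwB.sublist hbdc; simp [List.pairwise_cons] at this; omega
        · have := hpwB.sublist hall; simp [List.pairwise_cons] at this; omega
      · rintro ⟨a, b, c, d, hsub, h1, h2, h3⟩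
        rcases split4 hsub with h | ⟨hc, hr⟩ | ⟨hca, hr⟩ | ⟨hcad, hr⟩ | hall
        · exact hP2 ⟨a, b, c, d, h, h1, h2, h3⟩
        · have hcB : c ∈ B := hc.subset (by simp)
          have hdb : [d,b].Sublist inp := (List.sublist_cons_self a [d,b]).trans hr
          exact hF c (List.mem_append_left st hcB) d b hdb h2 h3
        · have := hpwB.sublist hca; simp [List.pairwise_cons] at this; omega
        · have := hpwB.sublist hcad; simp [List.pairwise_cons] at this; omega
        · have := hpwB.sublist hall; simp [List.pairwise_cons] at this; omega
      · rintro ⟨a, b, c, d, hsub, h1, h2, h3⟩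
        rcases split4 hsub with h | ⟨hc, hr⟩ | ⟨hcb, hr⟩ | ⟨hcbd, hr⟩ | hall
        · exact hP3 ⟨a, b, c, d, h, h1, h2, h3⟩
        · have hcB : c ∈ B := hc.subset (by simp)
          have hda : [d,a].Sublist inp := (List.sublist_cons_self b [d,a]).trans hr
          exact hF c (List.mem_append_left st hcB) d a hda (h1.trans h2) h3
        · have := hpwB.sublist hcb; simp [List.pairwise_cons] at this; omega
        · have := hpwB.sublist hcbd; simp [List.pairwise_cons] at this; omega
        · have := hpwB.sublist hall; simp [List.pairwise_cons] at this; omega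
      · intro s hs d b hsub hb hd
        rcases split2 hsub with h | ⟨hd1, hb1⟩ | hdb
        · exact hF s (List.mem_append_right B hs) d b h hb hd
        · have hdB : d ∈ B := hd1.subset (by simp)
          have := hcross d hdB s hs; omega
        · have := hpwB.sublist hdb; simp [List.pairwise_cons] at this; omega


lemma machPops : ∀ (k next : ℕ), Mach [] (List.range' next k) next := by
  intro k
  induction k with
  | zero => intro next; exact Mach.done next
  | succ k ih =>
      intro next
      rw [List.range'_succ]
      exact Mach.pop _ _ _ (ih (next+1))

lemma maxpre (P : ℕ → Prop) : ∀ (l : List ℕ) (x : ℕ),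
    ∃ B₀ m r, x :: l = (B₀ ++ [m]) ++ r ∧ (B₀ ++ [m]).Chain' (· < ·) ∧
      (P x → ∀ v ∈ B₀ ++ [m], P v) ∧
      (r = [] ∨ ∃ y r', r = y :: r' ∧ (y ≤ m ∨ ¬ P y)) := by
  intro l
  induction l with
  | nil =>
      intro x
      exact ⟨[], x, [], by simp, List.isChain_singleton _, by simp +contextual, Or.inl rfl⟩
  | cons y l' ih =>
      intro x
      by_cases hc : x < y ∧ P y
      · obtain ⟨B₀, m, r, heq, hch, hP, hstop⟩ := ih y
        refine ⟨x :: B₀, m, r, ?_, ?_, ?_, hstop⟩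
        · simpa using congrArg (x :: ·) heq
        · show List.IsChain _ _
          rw [List.cons_append, List.isChain_cons]
          refine ⟨?_, hch⟩
          intro z hz
          have hhead : (B₀ ++ [m]).head? = some y := by
            cases B₀ with
            | nil => simp at heq ⊢; exact heq.1.symm
            | cons b B₀' => simp at heq ⊢; exact heq.1.symm
          rw [hhead] at hz
          simp at hz
          omega
        · intro hPx v hv
          simp at hv
          rcases hv with rfl | hv' | rfl
          · exact hPx
          · exact hP hc.2 v (by simp [hv'])
          · exact hP hc.2 v (by simp)
      · refine ⟨[], x, y :: l', by simp, List.isChain_singleton _, ?_, ?_⟩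
        · intro hPx v hv
          simp at hv
          subst hv
          exact hPx
        · right
          refine ⟨y, l', rfl, ?_⟩
          by_cases hxy : x < y
          · exact Or.inr (fun hPy => hc ⟨hxy, hPy⟩)
          · exact Or.inl (by omega)

theorem construct : ∀ (n : ℕ) (inp st : List ℕ) (next : ℕ),
    2 * inp.length + st.length ≤ n →
    ¬Has2431 inp → ¬Has3142 inp → ¬Has3241 inp →
    (∀ s ∈ st, NoF inp s) →
    (inp ++ st).Perm (List.range' next (inp.length + st.length)) →
    st.Chain' (· < ·) →
    Mach inp st next := by
  intro n
  induction n with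
  | zero =>
      intro inp st next hn h1 h2 h3 hF hV hch
      have hl : inp.length = 0 ∧ st.length = 0 := by omega
      obtain ⟨hi, hs⟩ := hl
      rw [List.length_eq_zero_iff] at hi hs
      subst hi hs
      exact Mach.done next
  | succ n ih =>
      intro inp st next hn h1 h2 h3 hF hV hch
      cases inp with
      | nil =>
          simp only [List.nil_append, List.length_nil, Nat.zero_add] at hV
          have hpw : st.Pairwise (· < ·) := List.isChain_iff_pairwise.1 hch
          have hst : st = List.range' next st.length :=
            List.Perm.eq_of_pairwise (fun a b _ _ h1 h2 => absurd (h1.trans h2) (lt_irrefl _)) hpw List.pairwise_lt_range' hV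
          rw [hst]; exact machPops _ _
      | cons x inp₂ =>
          have hndall : ((x :: inp₂) ++ st).Nodup :=
            hV.nodup_iff.mpr List.nodup_range'
          obtain ⟨hndI, hndS, hdisj⟩ := List.nodup_append.1 hndall
          have hge : ∀ v ∈ (x :: inp₂) ++ st, next ≤ v := fun v hv =>
            (List.mem_range'_1.1 (hV.subset hv)).1
          have hnext_mem : next ∈ (x :: inp₂) ++ st := by
            refine hV.symm.subset (List.mem_range'_1.2 ⟨le_refl _, ?_⟩)
            simp
          by_cases hpop : st.head? = some next
          · -- pop branch
            cases st with
            | nil => simp at hpop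
            | cons s0 st' =>
                simp only [List.head?_cons, Option.some.injEq] at hpop
                subst hpop
                refine Mach.pop _ _ _ ?_
                have e : (x :: inp₂).length + (s0 :: st').length
                    = ((x :: inp₂).length + st'.length) + 1 := by
                  simp only [List.length_cons]; omega
                rw [e, List.range'_succ] at hV
                refine ih (x :: inp₂) st' (s0 + 1) ?_ h1 h2 h3 ?_ ?_ ?_
                · simp at hn ⊢; omega
                · exact fun s hs => hF s (List.mem_cons_of_mem _ hs)
                · exact (List.perm_middle.symm.trans hV).cons_inv
                · exact List.IsChain.tail hch
          · -- push branch
            have hPx : ∀ s0 ∈ st.head?, x < s0 := by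
              intro s0 hs0
              rw [Option.mem_def] at hs0
              have hs0mem : s0 ∈ st := by
                cases st with
                | nil => simp at hs0
                | cons t st'' =>
                    rw [List.head?_cons, Option.some.injEq] at hs0
                    rw [← hs0]; exact List.mem_cons_self
              have hs0min : ∀ v ∈ st, s0 ≤ v := by
                cases st with
                | nil => simp at hs0
                | cons t st'' =>
                    rw [List.head?_cons, Option.some.injEq] at hs0
                    intro v hv
                    rcases List.mem_cons.1 hv with rfl | hv2
                    · omega
                    · have hpws : (t :: st'').Pairwise (· < ·) :=
                        List.isChain_iff_pairwise.1 hch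
                      have := (List.pairwise_cons.1 hpws).1 v hv2
                      omega
              have hs0next : s0 ≠ next := fun h => hpop (h ▸ hs0)
              by_contra hxs
              push_neg at hxs
              have hxmem : x ∉ st := fun h =>
                hdisj x List.mem_cons_self x h rfl
              have hxs0 : x ≠ s0 := fun h => hxmem (h ▸ hs0mem)
              have hs0x : s0 < x := by omega
              have hs0ge : next ≤ s0 := hge s0 (List.mem_append_right _ hs0mem)
              have hs0gt : next < s0 := by omega
              rcases List.mem_append.1 hnext_mem with hni | hns
              · rcases List.mem_cons.1 hni with rfl | hni₂
                · omega
                · have hsub : [x, next].Sublist (x :: inp₂) :=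
                    List.Sublist.cons₂ x (List.singleton_sublist.2 hni₂)
                  exact hF s0 hs0mem x next hsub hs0gt hs0x
              · have := hs0min next hns
                omega
            obtain ⟨B₀, m, r, heq, hchB, hPB, hstop⟩ :=
              maxpre (fun v => ∀ s0 ∈ st.head?, v < s0) inp₂ x
            have hPall : ∀ v ∈ B₀ ++ [m], ∀ s0 ∈ st.head?, v < s0 := hPB hPx
            have hchBS : ((B₀ ++ [m]) ++ st).Chain' (· < ·) := by
              show List.IsChain _ _
              rw [List.isChain_append]
              refine ⟨hchB, hch, ?_⟩
              intro a ha b hb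
              rw [List.getLast?_concat] at ha
              simp at ha
              subst ha
              exact hPall _ (by simp) b hb
            have hrsub : r.Sublist (x :: inp₂) := by
              rw [heq]; exact List.sublist_append_right _ _
            have hndBR : ((B₀ ++ [m]) ++ r).Nodup := heq ▸ hndI
            obtain ⟨hndB, hndR, hdisjBR⟩ := List.nodup_append.1 hndBR
            obtain ⟨hpwB₀, hpwm, hcrossB⟩ :=
              List.pairwise_append.1 (List.isChain_iff_pairwise.1 hchB)
            rw [show x :: inp₂ = (B₀ ++ [m]) ++ r from heq]
            refine Mach.push _ r st next (by simp) hchBS ?_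
            have hlen : (x :: inp₂).length = (B₀ ++ [m]).length + r.length := by
              rw [heq]; simp; omega
            refine ih r ((B₀ ++ [m]) ++ st) next ?_ ?_ ?_ ?_ ?_ ?_ hchBS
            · simp only [List.length_cons, List.length_append,
                List.length_singleton] at hn hlen ⊢
              omega
            · intro ⟨a, b, c, d, hs, hh⟩; exact h1 ⟨a, b, c, d, hs.trans hrsub, hh⟩
            · intro ⟨a, b, c, d, hs, hh⟩; exact h2 ⟨a, b, c, d, hs.trans hrsub, hh⟩
            · intro ⟨a, b, c, d, hs, hh⟩; exact h3 ⟨a, b, c, d, hs.trans hrsub, hh⟩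
            · -- the combinatorial core: NoF for the new stack
              intro s hs
              rcases List.mem_append.1 hs with hsB | hsst
              · intro d bb hsub hbb hd
                rcases hstop with rfl | ⟨y, r', rfl, hy⟩
                · simp at hsub
                · have hbm : s ≤ m := by
                    rcases List.mem_append.1 hsB with h | h
                    · exact le_of_lt (hcrossB s h m (by simp))
                    · simp at h; omega
                  have hbbr : bb ∈ y :: r' := hsub.subset (by simp)
                  have hdr : d ∈ y :: r' := hsub.subset (by simp)
                  rcases hy with hym | hnPy
                  · -- y ≤ m (maximality by value)
                    have hym2 : y ≠ m := by
                      intro h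
                      exact hdisjBR m (show m ∈ B₀ ++ [m] by simp) m (by simp [← h]) rfl
                    have hylt : y < m := by omega
                    rcases List.sublist_cons_iff.1 hsub with hsub' | ⟨r₂, hdeq, hr₂⟩
                    · -- d, bb both in r'
                      have hdm : d ≠ m := fun h => by
                        exact hdisjBR m (by simp) d hdr h.symm
                      by_cases hdm2 : d < m
                      · have hsB₀ : s ∈ B₀ := by
                          rcases List.mem_append.1 hsB with h | h
                          · exact h
                          · simp at h; omega
                        apply h1
                        refine ⟨bb, s, d, m, ?_, hbb, hd, hdm2⟩
                        rw [heq]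
                        have hsml : [s, m].Sublist (B₀ ++ [m]) :=
                          List.Sublist.append (List.singleton_sublist.2 hsB₀)
                            (List.Sublist.refl [m])
                        simpa using hsml.append hsub
                      · have hdm3 : m < d := by omega
                        have hbbr' : bb ∈ r' := by
                          have := hsub'.subset (show bb ∈ [d, bb] by simp)
                          exact this
                        have hybb : y ≠ bb := fun h => by
                          exact (List.nodup_cons.1 hndR).1 (h ▸ hbbr')
                        by_cases hby : bb < y
                        · apply h3
                          refine ⟨bb, y, m, d, ?_, hby, hylt, hdm3⟩
                          rw [heq]
                          have l1 : [m].Sublist (B₀ ++ [m]) := by simp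
                          have l2 : [y, d, bb].Sublist (y :: r') :=
                            List.Sublist.cons₂ y hsub'
                          simpa using l1.append l2
                        · have hyb : y < bb := by omega
                          apply h2
                          refine ⟨y, bb, m, d, ?_, hyb, by omega, hdm3⟩
                          rw [heq]
                          have l1 : [m].Sublist (B₀ ++ [m]) := by simp
                          have l2 : [y, d, bb].Sublist (y :: r') :=
                            List.Sublist.cons₂ y hsub'
                          simpa using l1.append l2
                    · -- d = y
                      have hdy : d = y ∧ r₂ = [bb] := by
                        have h' := hdeq
                        simp at h'
                        exact ⟨h'.1, h'.2.symm⟩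
                      obtain ⟨rfl, rfl⟩ := hdy
                      have hsB₀ : s ∈ B₀ := by
                        rcases List.mem_append.1 hsB with h | h
                        · exact h
                        · simp at h; omega
                      apply h1
                      refine ⟨bb, s, d, m, ?_, hbb, hd, by omega⟩
                      rw [heq]
                      have hsml : [s, m].Sublist (B₀ ++ [m]) :=
                        List.Sublist.append (List.singleton_sublist.2 hsB₀)
                          (List.Sublist.refl [m])
                      have hdbr : [d, bb].Sublist (d :: r') :=
                        List.Sublist.cons₂ d hr₂
                      simpa using hsml.append hdbr
                  · -- maximality by stack bound
                    cases st with
                    | nil => exact hnPy (by simp)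
                    | cons s0 st'' =>
                        have hys0 : s0 ≤ y := by
                          by_contra h
                          push_neg at h
                          exact hnPy (by simpa using h)
                        have hyinp : y ∈ x :: inp₂ := by
                          rw [heq]; exact List.mem_append_right _ (by simp)
                        have hyne : y ≠ s0 := fun h => by
                          exact hdisj y hyinp s0 (by simp) h
                        have hs0y : s0 < y := by omega
                        have hss0 : s < s0 := hPall s hsB s0 (by simp)
                        have hbbs0 : bb < s0 := by omega
                        have hbby : bb ≠ y := by omega
                        have hbbr' : bb ∈ r' := by
                          rcases List.mem_cons.1 hbbr with h | h
                          · exact absurd h hbby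
                          · exact h
                        have hsubyb : [y, bb].Sublist (x :: inp₂) := by
                          rw [heq]
                          refine List.Sublist.trans ?_ (List.sublist_append_right _ _)
                          exact List.Sublist.cons₂ y (List.singleton_sublist.2 hbbr')
                        exact hF s0 (by simp) y bb hsubyb hbbs0 hs0y
              · intro d bb hsub hbb hd
                exact hF s hsst d bb (hsub.trans hrsub) hbb hd
            · -- permutation bookkeeping
              rw [heq] at hV
              have e2 : r.length + ((B₀ ++ [m]) ++ st).length
                  = ((B₀ ++ [m]) ++ r).length + st.length := by
                simp only [List.length_append, List.length_cons,
                  List.length_singleton]; omega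
              rw [e2]
              refine List.Perm.trans ?_ hV
              rw [show r ++ ((B₀ ++ [m]) ++ st) = (r ++ (B₀ ++ [m])) ++ st from
                (List.append_assoc _ _ _).symm]
              exact (List.perm_append_comm).append_right st

lemma psSortable_iff_mach (p : List ℕ) : PSSortable p ↔ Mach p [] 1 := by
  constructor
  · intro h
    have := rtg_to_mach h p [] [] [] 1 rfl (by simp)
    simpa using this
  · intro h
    have := mach_to_rtg h []
    simpa [PSSortable] using this

lemma contains2431_iff (p : List ℕ) : ContainsPat p [2, 4, 3, 1] ↔ Has2431 p := by
  constructor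
  · rintro ⟨s, hsub, hlen, hiso⟩
    rcases s with _ | ⟨x0, _ | ⟨x1, _ | ⟨x2, _ | ⟨x3, _ | ⟨x4, t⟩⟩⟩⟩⟩ <;> simp at hlen
    have h1 : x3 < x0 := (hiso 3 0 (by simp) (by simp)).mpr (by norm_num)
    have h2 : x0 < x2 := (hiso 0 2 (by simp) (by simp)).mpr (by norm_num)
    have h3 : x2 < x1 := (hiso 2 1 (by simp) (by simp)).mpr (by norm_num)
    exact ⟨x3, x0, x2, x1, hsub, h1, h2, h3⟩
  · rintro ⟨a, b, c, d, hsub, h1, h2, h3⟩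
    refine ⟨[b, d, c, a], hsub, by simp, ?_⟩
    intro i j hi hj
    simp at hi hj
    interval_cases i <;> interval_cases j <;> simp <;> omega

lemma contains3142_iff (p : List ℕ) : ContainsPat p [3, 1, 4, 2] ↔ Has3142 p := by
  constructor
  · rintro ⟨s, hsub, hlen, hiso⟩
    rcases s with _ | ⟨x0, _ | ⟨x1, _ | ⟨x2, _ | ⟨x3, _ | ⟨x4, t⟩⟩⟩⟩⟩ <;> simp at hlen
    have h1 : x1 < x3 := (hiso 1 3 (by simp) (by simp)).mpr (by norm_num)
    have h2 : x3 < x0 := (hiso 3 0 (by simp) (by simp)).mpr (by norm_num)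
    have h3 : x0 < x2 := (hiso 0 2 (by simp) (by simp)).mpr (by norm_num)
    exact ⟨x1, x3, x0, x2, hsub, h1, h2, h3⟩
  · rintro ⟨a, b, c, d, hsub, h1, h2, h3⟩
    refine ⟨[c, a, d, b], hsub, by simp, ?_⟩
    intro i j hi hj
    simp at hi hj
    interval_cases i <;> interval_cases j <;> simp <;> omega

lemma contains3241_iff (p : List ℕ) : ContainsPat p [3, 2, 4, 1] ↔ Has3241 p := by
  constructor
  · rintro ⟨s, hsub, hlen, hiso⟩
    rcases s with _ | ⟨x0, _ | ⟨x1, _ | ⟨x2, _ | ⟨x3, _ | ⟨x4, t⟩⟩⟩⟩⟩ <;> simp at hlen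
    have h1 : x3 < x1 := (hiso 3 1 (by simp) (by simp)).mpr (by norm_num)
    have h2 : x1 < x0 := (hiso 1 0 (by simp) (by simp)).mpr (by norm_num)
    have h3 : x0 < x2 := (hiso 0 2 (by simp) (by simp)).mpr (by norm_num)
    exact ⟨x3, x1, x0, x2, hsub, h1, h2, h3⟩
  · rintro ⟨a, b, c, d, hsub, h1, h2, h3⟩
    refine ⟨[c, b, d, a], hsub, by simp, ?_⟩
    intro i j hi hj
    simp at hi hj
    interval_cases i <;> interval_cases j <;> simp <;> omega


theorem stmt11 (p : List ℕ) (hp : IsPermList p) :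
    PSSortable p ↔
      (AvoidsPat p [2, 4, 3, 1] ∧ AvoidsPat p [3, 1, 4, 2] ∧ AvoidsPat p [3, 2, 4, 1]) := by
  have hV : (p ++ ([] : List ℕ)).Perm (List.range' 1 (p.length + ([] : List ℕ).length)) := by
    simpa [IsPermList] using hp
  constructor
  · intro hsort
    have hm : Mach p [] 1 := (psSortable_iff_mach p).1 hsort
    obtain ⟨⟨hA, hB, hC⟩, -⟩ := mach_inv hm hV
    exact ⟨fun hc => hA ((contains2431_iff p).1 hc),
           fun hc => hB ((contains3142_iff p).1 hc),
           fun hc => hC ((contains3241_iff p).1 hc)⟩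
  · rintro ⟨hA, hB, hC⟩
    refine (psSortable_iff_mach p).2 ?_
    refine construct (2 * p.length) p [] 1 (by simp)
      (fun h => hA ((contains2431_iff p).2 h))
      (fun h => hB ((contains3142_iff p).2 h))
      (fun h => hC ((contains3241_iff p).2 h))
      (by simp) hV List.isChain_nil
end
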